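/- Let $(M, d)$ be a compact geodesic metric space with diameter $\overline{D}$, let $K > 0$, $C_L > 0$, $c_0 \in \mathbb{R}$, and let $\lambda \in (0,1)$. Let $w_\lambda : M \to \mathbb{R}$ satisfy: for every constant-speed geodesic $\zeta : [0, d] \to M$ (with $d = d(\zeta(0), \zeta(d))$) and every $s \in [0,d]$, $$w_\lambda(\zeta(s)) \le m_\lambda + (C_L + \lambda K |m_\lambda|)\,d + \lambda K \int_0^s \big(w_\lambda(\zeta(\tau)) - m_\lambda\big)\,d\tau,$$ where $m_\lambda = \min_M w_\lambda$. Then, with $A_+ = \max(C_L, K)\,\overline{D}\,e^{K \overline{D}}$, $$\max_{x \in M} w_\lambda(x) \le \min_{x \in M} w_\lambda(x) + A_+\big(1 + \lambda \min_{x\in M}|w_\lambda(x)|\big).$$ -/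

import Mathlib

open Real MeasureTheory

theorem stmt_4 {M : Type*} [MetricSpace M] [CompactSpace M] [Nonempty M]
    (Dbar K CL c0 lam mlam : ℝ)
    (hD : ∀ x y : M, dist x y ≤ Dbar)
    (hK : 0 < K) (hCL : 0 < CL) (hlam : lam ∈ Set.Ioo (0:ℝ) 1)
    (w : M → ℝ) (hw : Continuous w)
    (hmin : ∀ x, mlam ≤ w x) (hmin' : ∃ x, w x = mlam)
    (hgeod : ∀ x y : M, ∃ ζ : ℝ → M, ζ 0 = x ∧ ζ (dist x y) = y ∧
      ∀ s ∈ Set.Icc 0 (dist x y), ∀ t ∈ Set.Icc 0 (dist x y), dist (ζ s) (ζ t) = |s - t|)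
    (hdom : ∀ (d : ℝ) (ζ : ℝ → M), 0 ≤ d →
      (∀ s ∈ Set.Icc 0 d, ∀ t ∈ Set.Icc 0 d, dist (ζ s) (ζ t) = |s - t|) →
      ∀ s ∈ Set.Icc 0 d,
        w (ζ s) ≤ mlam + (CL + lam * K * |mlam|) * d
          + lam * K * ∫ τ in (0:ℝ)..s, (w (ζ τ) - mlam)) :
    ∀ x : M, w x ≤ mlam + (max CL K * Dbar * Real.exp (K * Dbar)) * (1 + lam * |mlam|) := by
  intro x
  obtain ⟨x₀, hx₀⟩ := hmin'
  obtain ⟨ζ, hζ0, hζd, hiso⟩ := hgeod x₀ x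
  set d : ℝ := dist x₀ x with hd
  have hd0 : 0 ≤ d := dist_nonneg
  have hdD : d ≤ Dbar := hD x₀ x
  have hD0 : 0 ≤ Dbar := le_trans hd0 hdD
  have hlam0 : 0 < lam := hlam.1
  have hlam1 : lam ≤ 1 := le_of_lt hlam.2
  -- clamp function
  set c : ℝ → ℝ := fun τ => max 0 (min τ d) with hc
  have hc_cont : Continuous c := continuous_const.max (continuous_id.min continuous_const)
  have hc_mem : ∀ τ, c τ ∈ Set.Icc 0 d := fun τ =>
    ⟨le_max_left _ _, max_le hd0 (min_le_right _ _)⟩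
  have hc_eq : ∀ τ ∈ Set.Icc 0 d, c τ = τ := fun τ hτ => by
    simp [hc, min_eq_left hτ.2, max_eq_right hτ.1]
  -- ζ is continuous on [0, d]
  have hζcont : ContinuousOn ζ (Set.Icc 0 d) := by
    refine (LipschitzOnWith.of_dist_le_mul (K := 1) ?_).continuousOn
    intro s hs t ht
    rw [hiso s hs t ht, NNReal.coe_one, one_mul, Real.dist_eq]
  -- the extended nonneg function g
  set g : ℝ → ℝ := fun τ => w (ζ (c τ)) - mlam with hg
  have hg_cont : Continuous g := by
    have : Continuous fun τ => ζ (c τ) := hζcont.comp_continuous hc_cont hc_mem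
    exact (hw.comp this).sub continuous_const
  have hg_nonneg : ∀ τ, 0 ≤ g τ := fun τ => sub_nonneg.2 (hmin _)
  -- F s = ∫ τ in 0..s, g τ
  set F : ℝ → ℝ := fun s => ∫ τ in (0:ℝ)..s, g τ with hF
  have hF_deriv : ∀ s : ℝ, HasDerivAt F (g s) s := fun s =>
    intervalIntegral.integral_hasDerivAt_right (hg_cont.intervalIntegrable _ _)
      (hg_cont.stronglyMeasurableAtFilter _ _) hg_cont.continuousAt
  have hF_cont : Continuous F := by
    refine continuous_iff_continuousAt.2 fun s => (hF_deriv s).continuousAt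
  -- the integral in hdom equals F on [0,d]
  have hint_eq : ∀ s ∈ Set.Icc (0:ℝ) d, (∫ τ in (0:ℝ)..s, (w (ζ τ) - mlam)) = F s := by
    intro s hs
    refine (intervalIntegral.integral_congr ?_).symm
    intro τ hτ
    rw [Set.uIcc_of_le hs.1] at hτ
    have hτd : τ ∈ Set.Icc (0:ℝ) d := ⟨hτ.1, le_trans hτ.2 hs.2⟩
    simp [hg, hc_eq τ hτd]
  set a0 : ℝ := (CL + lam * K * |mlam|) * d with ha0
  have ha0_nonneg : 0 ≤ a0 :=
    mul_nonneg (by positivity) hd0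
  -- key pointwise bound from hdom
  have hbound : ∀ s ∈ Set.Icc (0:ℝ) d, g s ≤ a0 + lam * K * F s := by
    intro s hs
    have := hdom d ζ hd0 hiso s hs
    rw [hint_eq s hs] at this
    have hcs : c s = s := hc_eq s hs
    simp only [hg, hcs]
    linarith
  -- Gronwall
  have hgr : ∀ s ∈ Set.Icc (0:ℝ) d, ‖F s‖ ≤ gronwallBound 0 (lam * K) a0 (s - 0) := by
    refine norm_le_gronwallBound_of_norm_deriv_right_le hF_cont.continuousOn
      (fun s _ => (hF_deriv s).hasDerivWithinAt) (by simp [hF]) ?_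
    intro s hs
    have hs' : s ∈ Set.Icc (0:ℝ) d := ⟨hs.1, le_of_lt hs.2⟩
    have h1 : ‖g s‖ = g s := Real.norm_of_nonneg (hg_nonneg s)
    have h2 : F s ≤ ‖F s‖ := le_abs_self _
    have h3 := hbound s hs'
    rw [h1]
    have : lam * K * F s ≤ lam * K * ‖F s‖ :=
      mul_le_mul_of_nonneg_left h2 (by positivity)
    linarith
  -- final bound for w x
  have hlamK : lam * K ≠ 0 := by positivity
  have hFd : lam * K * F d ≤ a0 * (Real.exp (lam * K * d) - 1) := by
    have := hgr d ⟨hd0, le_refl d⟩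
    rw [sub_zero, gronwallBound_of_K_ne_0 hlamK] at this
    have h2 : F d ≤ ‖F d‖ := le_abs_self _
    have hexp : 0 ≤ Real.exp (lam * K * d) - 1 := by
      have : (1:ℝ) ≤ Real.exp (lam * K * d) := Real.one_le_exp (by positivity)
      linarith
    calc lam * K * F d ≤ lam * K * ‖F d‖ :=
          mul_le_mul_of_nonneg_left h2 (by positivity)
      _ ≤ lam * K * (0 * Real.exp (lam * K * d) + a0 / (lam * K) * (Real.exp (lam * K * d) - 1)) :=
          mul_le_mul_of_nonneg_left this (by positivity)
      _ = a0 * (Real.exp (lam * K * d) - 1) := by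
          field_simp
          ring
  have hwx : w x - mlam ≤ a0 * Real.exp (lam * K * d) := by
    have h := hdom d ζ hd0 hiso d ⟨hd0, le_refl d⟩
    rw [hint_eq d ⟨hd0, le_refl d⟩, hζd] at h
    nlinarith [hFd]
  -- compare with the final constant
  have hexp_le : Real.exp (lam * K * d) ≤ Real.exp (K * Dbar) := by
    apply Real.exp_le_exp.2
    have h1 : lam * K * d ≤ K * d := by nlinarith [mul_nonneg (sub_nonneg.2 hlam1) (mul_nonneg hK.le hd0)]
    have h2 : K * d ≤ K * Dbar := mul_le_mul_of_nonneg_left hdD (le_of_lt hK)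
    linarith
  have ha0_le : a0 ≤ max CL K * Dbar * (1 + lam * |mlam|) := by
    have hCLm : CL ≤ max CL K := le_max_left _ _
    have hKm : K ≤ max CL K := le_max_right _ _
    have habs : 0 ≤ |mlam| := abs_nonneg _
    have h1 : CL + lam * K * |mlam| ≤ max CL K * (1 + lam * |mlam|) := by nlinarith [mul_nonneg (mul_nonneg hlam0.le habs) (sub_nonneg.2 hKm)]
    calc a0 = (CL + lam * K * |mlam|) * d := rfl
      _ ≤ max CL K * (1 + lam * |mlam|) * Dbar := by
          apply mul_le_mul h1 hdD hd0 (by positivity)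
      _ = max CL K * Dbar * (1 + lam * |mlam|) := by ring
  have hfinal : a0 * Real.exp (lam * K * d) ≤
      max CL K * Dbar * Real.exp (K * Dbar) * (1 + lam * |mlam|) := by
    calc a0 * Real.exp (lam * K * d) ≤ a0 * Real.exp (K * Dbar) :=
          mul_le_mul_of_nonneg_left hexp_le ha0_nonneg
      _ ≤ max CL K * Dbar * (1 + lam * |mlam|) * Real.exp (K * Dbar) :=
          mul_le_mul_of_nonneg_right ha0_le (Real.exp_nonneg _)
      _ = max CL K * Dbar * Real.exp (K * Dbar) * (1 + lam * |mlam|) := by ring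
  linarith
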